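/- Let n ≥ 2 and let w_0, ..., w_{n-1} be real arc weights on the directed cycle on n vertices such that w = Σ_i w_i ≠ 0 and w^{(2)} = Σ_{0 ≤ i < j ≤ n-1} w_i w_j ≠ 0. Let W be the weighted distance matrix. Then cof(W) = (-1)^{n-1} w^{n-1}, where cof(W) is the sum of all cofactors of W. -/

import Mathlib

open Matrix Finset

set_option linter.unusedSectionVars false
set_option maxHeartbeats 1000000

namespace CofAux

open Fin.NatCast Fin.CommRing

variable {n : ℕ} [NeZero n]

lemma det_updateRow_finsum (A : Matrix (Fin n) (Fin n) ℝ) (j : Fin n)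
    (u : Fin n → Fin n → ℝ) (s : Finset (Fin n)) :
    (A.updateRow j (∑ i ∈ s, u i)).det = ∑ i ∈ s, (A.updateRow j (u i)).det := by
  classical
  induction s using Finset.induction_on with
  | empty =>
      simp only [Finset.sum_empty]
      exact Matrix.det_eq_zero_of_row_eq_zero j (by simp)
  | insert _ _ h ih =>
      rw [Finset.sum_insert h, Finset.sum_insert h, Matrix.det_updateRow_add, ih]

lemma sum_adjugate (W : Matrix (Fin n) (Fin n) ℝ) :
    (∑ i, ∑ j, W.adjugate i j) = ∑ j, (W.updateRow j (fun _ => (1:ℝ))).det := by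
  refine Finset.sum_comm.trans ?_
  refine Finset.sum_congr rfl fun j _ => ?_
  have h1 : (fun _ => (1:ℝ)) = ∑ i : Fin n, Pi.single i (1:ℝ) := by
    have := Finset.univ_sum_single (fun _ => (1:ℝ) : Fin n → ℝ)
    exact this.symm
  rw [h1, det_updateRow_finsum]
  simp [Matrix.adjugate_apply]

lemma fin_mk_add_one (hn : 2 ≤ n) {k : ℕ} (hk : k < n) (hk1 : k + 1 < n) :
    (⟨k, hk⟩ : Fin n) + 1 = ⟨k + 1, hk1⟩ := by
  apply Fin.ext
  simp only [Fin.add_def, Fin.val_one']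
  rw [Nat.mod_eq_of_lt (by omega : 1 < n), Nat.mod_eq_of_lt hk1]

lemma rowops (hn : 2 ≤ n) (W : Matrix (Fin n) (Fin n) ℝ) (g : Fin n → ℝ) (t : Fin n) :
    ∀ k, k < (t : ℕ) →
      (Matrix.of fun (i j : Fin n) => if (i : ℕ) < k then W i j - W (i + 1) j
        else if i = t then g j else W i j).det = (W.updateRow t g).det := by
  intro k
  induction k with
  | zero =>
      intro _
      congr 1
      ext i j
      by_cases h : i = t <;> simp [Matrix.updateRow_apply, h]
  | succ k ih =>
      intro hk
      have hkt : k < (t : ℕ) := Nat.lt_of_succ_lt hk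
      have hkn : k < n := hkt.trans t.isLt
      have hk1n : k + 1 < n := hk.trans t.isLt
      set fk : Fin n := ⟨k, hkn⟩ with hfk
      set fk1 : Fin n := ⟨k + 1, hk1n⟩ with hfk1
      have hadd : fk + 1 = fk1 := fin_mk_add_one hn hkn hk1n
      have hfkt : fk ≠ t := by
        intro h; apply absurd hkt; rw [← h]; simp [hfk]
      have hfk1t : fk1 ≠ t := by
        intro h
        have : (fk1 : ℕ) = (t : ℕ) := by rw [h]
        simp [hfk1] at this; omega
      have key : (Matrix.of fun (i j : Fin n) => if (i : ℕ) < k + 1 then W i j - W (i + 1) j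
            else if i = t then g j else W i j)
          = Matrix.updateRow (Matrix.of fun (i j : Fin n) => if (i : ℕ) < k then W i j - W (i + 1) j
            else if i = t then g j else W i j) fk (fun j => W fk j - W (fk + 1) j) := by
        ext i j
        rw [Matrix.updateRow_apply]
        by_cases hi : i = fk
        · subst hi
          simp [hfk]
        · have hik : (i : ℕ) ≠ k := fun h => hi (Fin.ext h)
          rw [if_neg hi]
          simp only [Matrix.of_apply]
          by_cases h2 : (i : ℕ) < k
          · rw [if_pos h2, if_pos (by omega)]
          · rw [if_neg h2, if_neg (by omega)]
      rw [key]
      have hsub : (fun j => W fk j - W (fk + 1) j) = W fk + (-1 : ℝ) • W (fk + 1) := by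
        funext j; simp; ring
      rw [hsub, Matrix.det_updateRow_add, Matrix.det_updateRow_smul]
      have hrow : (Matrix.of fun (i j : Fin n) => if (i : ℕ) < k then W i j - W (i + 1) j
          else if i = t then g j else W i j) fk = W fk := by
        funext j
        simp only [Matrix.of_apply]
        rw [if_neg (by simp [hfk]), if_neg hfkt]
      have e1 : Matrix.updateRow (Matrix.of fun (i j : Fin n) => if (i : ℕ) < k then W i j - W (i + 1) j
          else if i = t then g j else W i j) fk (W fk)
          = (Matrix.of fun (i j : Fin n) => if (i : ℕ) < k then W i j - W (i + 1) j
          else if i = t then g j else W i j) := by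
        conv_lhs => rw [← hrow]
        exact Matrix.updateRow_eq_self _ _
      have e2 : (Matrix.updateRow (Matrix.of fun (i j : Fin n) => if (i : ℕ) < k then W i j - W (i + 1) j
          else if i = t then g j else W i j) fk (W (fk + 1))).det = 0 := by
        apply Matrix.det_zero_of_row_eq (i := fk) (j := fk1)
        · exact fun h => by
            have : (fk : ℕ) = (fk1 : ℕ) := by rw [h]
            simp [hfk, hfk1] at this
        · rw [Matrix.updateRow_self, Matrix.updateRow_ne (by
            intro h
            have : (fk1 : ℕ) = (fk : ℕ) := by rw [h]
            simp [hfk, hfk1] at this)]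
          funext j
          simp only [Matrix.of_apply]
          rw [if_neg (by simp [hfk1]), if_neg hfk1t, hadd]
      rw [e1, e2, ih hkt]
      ring

lemma pind (hn : 2 ≤ n) (W : Matrix (Fin n) (Fin n) ℝ) :
    ∀ m, m ≤ n - 1 →
      (Matrix.of fun (i j : Fin n) => if (i : ℕ) < m then W i j - W (i + 1) j
        else if (i : ℕ) = m then 1 else W i j).det
      = ∑ j ∈ Finset.range (m + 1), (W.updateRow (j : Fin n) (fun _ => (1:ℝ))).det := by
  intro m
  induction m with
  | zero =>
      intro _
      rw [Finset.sum_range_one]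
      congr 1
      ext i j
      rw [Matrix.updateRow_apply]
      simp only [Matrix.of_apply, Nat.not_lt_zero, if_false]
      by_cases h : i = ((0 : ℕ) : Fin n)
      · rw [if_pos h, if_pos (by subst h; simp)]
      · rw [if_neg h, if_neg (by
          intro hv
          exact h (by apply Fin.ext; simp [hv]))]
  | succ m ih =>
      intro hm
      have hm' : m ≤ n - 1 := by omega
      have hmn : m < n := by omega
      have hm1n : m + 1 < n := by omega
      set fm : Fin n := ⟨m, hmn⟩ with hfm
      set fm1 : Fin n := ⟨m + 1, hm1n⟩ with hfm1
      have hvm : (fm : ℕ) = m := rfl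
      have hvm1 : (fm1 : ℕ) = m + 1 := rfl
      have hadd : fm + 1 = fm1 := fin_mk_add_one hn hmn hm1n
      have hne : fm ≠ fm1 := by
        intro h
        have : (fm : ℕ) = (fm1 : ℕ) := by rw [h]
        rw [hvm, hvm1] at this; omega
      set B : Matrix (Fin n) (Fin n) ℝ := Matrix.of fun (i j : Fin n) =>
        if (i : ℕ) < m then W i j - W (i + 1) j
        else if i = fm1 then 1 else W i j with hB
      have key : (Matrix.of fun (i j : Fin n) => if (i : ℕ) < m + 1 then W i j - W (i + 1) j
            else if (i : ℕ) = m + 1 then 1 else W i j)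
          = Matrix.updateRow B fm (fun j => W fm j - W (fm + 1) j) := by
        ext i j
        rw [Matrix.updateRow_apply]
        by_cases hi : i = fm
        · rw [if_pos hi, hi]
          simp only [Matrix.of_apply]
          rw [if_pos (show (fm : ℕ) < m + 1 by rw [hvm]; omega)]
        · have hik : (i : ℕ) ≠ m := fun h => hi (Fin.ext h)
          rw [if_neg hi, hB]
          simp only [Matrix.of_apply]
          by_cases h2 : (i : ℕ) < m
          · rw [if_pos h2, if_pos (by omega)]
          · rw [if_neg h2, if_neg (by omega)]
            by_cases h3 : (i : ℕ) = m + 1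
            · rw [if_pos h3, if_pos (Fin.ext h3)]
            · rw [if_neg h3, if_neg (fun h => h3 (by rw [h, hvm1]))]
      rw [key]
      have hsub : (fun j => W fm j - W (fm + 1) j) = W fm + (-1 : ℝ) • W (fm + 1) := by
        funext j; simp; ring
      rw [hsub, Matrix.det_updateRow_add, Matrix.det_updateRow_smul]
      have hrowB : B fm = W fm := by
        funext j
        rw [hB]
        simp only [Matrix.of_apply]
        rw [if_neg (show ¬((fm : ℕ) < m) by rw [hvm]; omega), if_neg hne]
      have e1 : Matrix.updateRow B fm (W fm) = B := by
        conv_lhs => rw [← hrowB]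
        exact Matrix.updateRow_eq_self _ _
      have e1' : B.det = (W.updateRow fm1 (fun _ => (1:ℝ))).det := by
        rw [hB]
        exact rowops hn W _ fm1 m (by rw [hvm1]; omega)
      set Pm : Matrix (Fin n) (Fin n) ℝ := Matrix.of fun (i j : Fin n) =>
        if (i : ℕ) < m then W i j - W (i + 1) j
        else if (i : ℕ) = m then 1 else W i j with hPm
      have e2 : Matrix.updateRow B fm (W (fm + 1)) = Pm.submatrix (Equiv.swap fm fm1) id := by
        ext i j
        rw [Matrix.updateRow_apply]
        simp only [Matrix.submatrix_apply, id]
        by_cases hi : i = fm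
        · rw [if_pos hi, hi, Equiv.swap_apply_left, hadd, hPm]
          simp only [Matrix.of_apply]
          rw [if_neg (show ¬((fm1 : ℕ) < m) by rw [hvm1]; omega),
            if_neg (show ¬((fm1 : ℕ) = m) by rw [hvm1]; omega)]
        · rw [if_neg hi]
          by_cases hi1 : i = fm1
          · have hswap : Equiv.swap fm fm1 i = fm := by rw [hi1, Equiv.swap_apply_right]
            have hiv : (i : ℕ) = m + 1 := by rw [hi1, hvm1]
            rw [hswap, hB, hPm]
            simp only [Matrix.of_apply]
            rw [if_neg (show ¬((i : ℕ) < m) by omega), if_pos hi1,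
              if_neg (show ¬((fm : ℕ) < m) by rw [hvm]; omega)]
            simp [hvm]
          · rw [Equiv.swap_apply_of_ne_of_ne hi hi1, hB, hPm]
            have hik : (i : ℕ) ≠ m := fun h => hi (Fin.ext h)
            have hik1 : (i : ℕ) ≠ m + 1 := fun h => hi1 (Fin.ext h)
            simp only [Matrix.of_apply]
            by_cases h2 : (i : ℕ) < m
            · rw [if_pos h2, if_pos h2]
            · rw [if_neg h2, if_neg h2, if_neg hi1, if_neg hik]
      have e2' : (Pm.submatrix (Equiv.swap fm fm1) id).det = - Pm.det := by
        rw [Matrix.det_permute, Equiv.Perm.sign_swap hne]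
        simp
      rw [e1, e2, e2', e1', ih hm']
      simp only [Finset.sum_range_succ]
      have hcast : ((m + 1 : ℕ) : Fin n) = fm1 := by
        apply Fin.ext
        rw [Fin.val_cast_of_lt hm1n, hvm1]
      rw [hcast]
      ring

lemma mdet (hn : 2 ≤ n) (w : Fin n → ℝ) (c : ℝ) :
    (Matrix.of fun (i j : Fin n) => if (i : ℕ) < n - 1 then
        (w i - if j = i then c else 0) else 1).det = (-c) ^ (n - 1) := by
  have main : ∀ k, k ≤ n - 1 →
      (Matrix.of fun (i j : Fin n) => if (i : ℕ) < n - 1 then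
        (w i - if j = i then c else 0) else 1).det
      = (Matrix.of fun (i j : Fin n) => if (i : ℕ) < k then (if j = i then -c else 0)
          else if (i : ℕ) < n - 1 then (w i - if j = i then c else 0) else 1).det := by
    intro k
    induction k with
    | zero =>
        intro _
        congr 1
    | succ k ih =>
        intro hk
        have hk' : k ≤ n - 1 := by omega
        have hkn : k < n := by omega
        have hkn1 : k < n - 1 := by omega
        set fk : Fin n := ⟨k, hkn⟩ with hfk
        have hvk : (fk : ℕ) = k := rfl
        set Q1 : Matrix (Fin n) (Fin n) ℝ := Matrix.of fun (i j : Fin n) =>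
          if (i : ℕ) < k + 1 then (if j = i then -c else 0)
          else if (i : ℕ) < n - 1 then (w i - if j = i then c else 0) else 1 with hQ1
        rw [ih hk']
        have hQk : (Matrix.of fun (i j : Fin n) => if (i : ℕ) < k then (if j = i then -c else 0)
            else if (i : ℕ) < n - 1 then (w i - if j = i then c else 0) else 1)
            = Matrix.updateRow Q1 fk (fun j => w fk - if j = fk then c else 0) := by
          ext i j
          rw [Matrix.updateRow_apply]
          by_cases hi : i = fk
          · rw [if_pos hi, hi]
            simp only [Matrix.of_apply]
            rw [if_neg (show ¬((fk : ℕ) < k) by rw [hvk]; omega),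
              if_pos (show ((fk : ℕ) < n - 1) by rw [hvk]; omega)]
          · have hik : (i : ℕ) ≠ k := fun h => hi (Fin.ext h)
            rw [if_neg hi, hQ1]
            simp only [Matrix.of_apply]
            by_cases h2 : (i : ℕ) < k
            · rw [if_pos h2, if_pos (show (i : ℕ) < k + 1 by omega)]
            · rw [if_neg h2, if_neg (show ¬((i : ℕ) < k + 1) by omega)]
        rw [hQk]
        have hrow : (fun j => w fk - if j = fk then c else 0)
            = (w fk) • (fun _ => (1:ℝ)) + (fun j => if j = fk then -c else 0) := by
          funext j
          by_cases h : j = fk <;> simp [h] <;> ring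
        rw [hrow, Matrix.det_updateRow_add, Matrix.det_updateRow_smul]
        have hlast : n - 1 < n := by omega
        set fl : Fin n := ⟨n - 1, hlast⟩ with hfl
        have hz : (Matrix.updateRow Q1 fk ((fun _ => (1:ℝ)))).det = 0 := by
          apply Matrix.det_zero_of_row_eq (i := fk) (j := fl)
          · intro h
            have : (fk : ℕ) = (fl : ℕ) := by rw [h]
            rw [hvk] at this
            simp only [hfl] at this
            omega
          · rw [Matrix.updateRow_self, Matrix.updateRow_ne (by
              intro h
              have : (fl : ℕ) = (fk : ℕ) := by rw [h]
              rw [hvk] at this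
              simp only [hfl] at this
              omega)]
            funext j
            rw [hQ1]
            simp only [Matrix.of_apply]
            rw [if_neg (show ¬((fl : ℕ) < k + 1) from by
                show ¬(n - 1 < k + 1); omega),
              if_neg (show ¬((fl : ℕ) < n - 1) from by show ¬(n - 1 < n - 1); omega)]
        have hself : Matrix.updateRow Q1 fk (fun j => if j = fk then -c else 0) = Q1 := by
          have : Q1 fk = (fun j => if j = fk then -c else 0) := by
            funext j
            rw [hQ1]
            simp only [Matrix.of_apply]
            rw [if_pos (show (fk : ℕ) < k + 1 by rw [hvk]; omega)]
          conv_lhs => rw [← this]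
          exact Matrix.updateRow_eq_self _ _
        rw [hz, hself, hQ1]
        ring
  rw [main (n - 1) le_rfl]
  have htri : (Matrix.of fun (i j : Fin n) => if (i : ℕ) < n - 1 then (if j = i then -c else 0)
      else if (i : ℕ) < n - 1 then (w i - if j = i then c else 0) else 1).det
      = ∏ i : Fin n, (if (i : ℕ) < n - 1 then -c else 1) := by
    rw [Matrix.det_of_lowerTriangular]
    · refine Finset.prod_congr rfl fun i _ => ?_
      simp only [Matrix.of_apply]
      by_cases h : (i : ℕ) < n - 1
      · simp [h]
      · simp [h]
    · intro i j hij
      have hij' : (i : ℕ) < (j : ℕ) := hij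
      simp only [Matrix.of_apply]
      have hi1 : (i : ℕ) < n - 1 := by have := j.isLt; omega
      rw [if_pos hi1, if_neg (by
        intro h
        have : (j : ℕ) = (i : ℕ) := by rw [h]
        omega)]
  rw [htri]
  rw [Fin.prod_univ_eq_prod_range (fun k => if k < n - 1 then -c else 1) n]
  have hsplit : n = (n - 1) + 1 := by omega
  rw [show Finset.range n = Finset.range ((n - 1) + 1) from by rw [← hsplit],
    Finset.prod_range_succ]
  rw [if_neg (by omega)]
  rw [mul_one]
  have : ∀ x ∈ Finset.range (n - 1), (if x < n - 1 then -c else 1) = -c := by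
    intro x hx
    rw [if_pos (Finset.mem_range.mp hx)]
  rw [Finset.prod_congr rfl this, Finset.prod_const, Finset.card_range]

lemma val_one_of (hn : 2 ≤ n) : ((1 : Fin n) : ℕ) = 1 := by
  rw [Fin.val_one']
  exact Nat.mod_eq_of_lt (by omega)

lemma sub_one_val (hn : 2 ≤ n) (x : Fin n) (hx : x ≠ 0) : ((x - 1 : Fin n) : ℕ) = (x : ℕ) - 1 := by
  have hx1 : 1 ≤ (x : ℕ) := by
    rcases Nat.eq_zero_or_pos (x : ℕ) with h | h
    · exact absurd (Fin.ext (by simp [h]) : x = 0) hx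
    · omega
  rw [Fin.sub_def]
  simp only
  rw [val_one_of hn]
  rw [show n - 1 + (x : ℕ) = n + ((x : ℕ) - 1) by omega, Nat.add_mod_left,
    Nat.mod_eq_of_lt (by have := x.isLt; omega)]

lemma neg_one_val (hn : 2 ≤ n) : ((-1 : Fin n) : ℕ) = n - 1 := by
  rw [Fin.neg_def]
  simp only
  rw [val_one_of hn, Nat.mod_eq_of_lt (by omega)]

lemma sum_shift (w : Fin n → ℝ) (a : Fin n) :
    ∑ x : Fin n, w x = ∑ k ∈ Finset.range n, w (a + (k : Fin n)) := by
  rw [← Fin.sum_univ_eq_sum_range (fun k => w (a + (k : Fin n))) n]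
  simp only [Fin.cast_val_eq_self]
  exact (Equiv.sum_comp (Equiv.addLeft a) w).symm

lemma rowdiff (hn : 2 ≤ n) (w : Fin n → ℝ) (i j : Fin n) :
    (∑ k ∈ Finset.range (((j - i : Fin n)) : ℕ), w (i + (k : Fin n)))
      - (∑ k ∈ Finset.range (((j - (i + 1) : Fin n)) : ℕ), w ((i + 1) + (k : Fin n)))
    = w i - if j = i then (∑ x, w x) else 0 := by
  by_cases hji : j = i
  · subst hji
    rw [if_pos rfl]
    have h0 : ((j - j : Fin n) : ℕ) = 0 := by rw [sub_self]; rfl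
    rw [h0, Finset.sum_range_zero]
    have hneg : (j - (j + 1) : Fin n) = -1 := by ring
    rw [hneg, neg_one_val hn]
    have hfull := sum_shift w (j + 1)
    rw [show Finset.range n = Finset.range ((n - 1) + 1) from by congr 1; omega,
      Finset.sum_range_succ] at hfull
    have hlast : (j + 1) + ((n - 1 : ℕ) : Fin n) = j := by
      have : ((n - 1 : ℕ) : Fin n) = -1 := by
        apply Fin.ext
        rw [Fin.val_cast_of_lt (by omega), neg_one_val hn]
      rw [this]; ring
    rw [hlast] at hfull
    have : ∑ k ∈ Finset.range (n - 1), w ((j + 1) + (k : Fin n))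
        = (∑ x, w x) - w j := by rw [hfull]; ring
    rw [this]
    ring
  · rw [if_neg hji]
    have hd0 : (j - i : Fin n) ≠ 0 := sub_ne_zero.mpr hji
    have hd1 : 1 ≤ ((j - i : Fin n) : ℕ) := by
      rcases Nat.eq_zero_or_pos ((j - i : Fin n) : ℕ) with h | h
      · exact absurd (Fin.ext (by simp [h]) : (j - i : Fin n) = 0) hd0
      · omega
    have hsub : (j - (i + 1) : Fin n) = (j - i) - 1 := by ring
    have hval : ((j - (i + 1) : Fin n) : ℕ) = ((j - i : Fin n) : ℕ) - 1 := by
      rw [hsub, sub_one_val hn _ hd0]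
    rw [hval]
    obtain ⟨D, hD⟩ : ∃ D, ((j - i : Fin n) : ℕ) = D + 1 := ⟨((j - i : Fin n) : ℕ) - 1, by omega⟩
    rw [hD]
    simp only [Nat.add_sub_cancel]
    rw [Finset.sum_range_succ']
    have hterm : ∀ k : ℕ, w (i + ((k + 1 : ℕ) : Fin n)) = w ((i + 1) + (k : Fin n)) := by
      intro k
      congr 1
      push_cast
      ring
    rw [Finset.sum_congr rfl (fun k _ => hterm k)]
    simp only [Nat.cast_zero, add_zero]
    ring

end CofAux

open Matrix

open Fin.NatCast in
theorem stmt_13 {n : ℕ} [NeZero n] (hn : 2 ≤ n) (w : Fin n → ℝ)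
    (hw : (∑ i, w i) ≠ 0)
    (hw2 : (∑ i, ∑ j ∈ Finset.Ioi i, w i * w j) ≠ 0)
    (W : Matrix (Fin n) (Fin n) ℝ)
    (hW : W = Matrix.of fun i j => ∑ k ∈ Finset.range ((j - i : Fin n) : ℕ), w (i + (Fin.ofNat n k))) :
    (∑ i, ∑ j, W.adjugate i j) = (-1 : ℝ) ^ (n - 1) * (∑ i, w i) ^ (n - 1) := by
  rw [CofAux.sum_adjugate]
  have h2 : ∑ j : Fin n, (W.updateRow j fun _ => (1:ℝ)).det
      = ∑ j ∈ Finset.range n, (W.updateRow ((j : ℕ) : Fin n) fun _ => (1:ℝ)).det := by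
    rw [← Fin.sum_univ_eq_sum_range
      (fun j : ℕ => (W.updateRow ((j : ℕ) : Fin n) fun _ => (1:ℝ)).det) n]
    simp only [Fin.cast_val_eq_self]
  rw [h2, show Finset.range n = Finset.range ((n - 1) + 1) from by congr 1; omega,
    ← CofAux.pind hn W (n - 1) le_rfl]
  have h4 : (Matrix.of fun (i j : Fin n) => if (i : ℕ) < n - 1 then W i j - W (i + 1) j
        else if (i : ℕ) = n - 1 then 1 else W i j)
      = (Matrix.of fun (i j : Fin n) => if (i : ℕ) < n - 1 then
        (w i - if j = i then (∑ x, w x) else 0) else 1) := by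
    ext i j
    simp only [Matrix.of_apply]
    by_cases h : (i : ℕ) < n - 1
    · rw [if_pos h, if_pos h, hW]
      simp only [Matrix.of_apply]
      exact CofAux.rowdiff hn w i j
    · rw [if_neg h, if_neg h, if_pos (by have := i.isLt; omega)]
  rw [h4, CofAux.mdet hn w (∑ x, w x), neg_pow]
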